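/- For any (n+1)×n matrix (μ_{ij})_{0≤i≤n, 0≤j≤n-1} over a commutative ring and scalar λ, the determinant of the n×n matrix with entries λ μ_{ij} - μ_{i+1,j} (0 ≤ i,j ≤ n-1) equals the determinant of the (n+1)×(n+1) matrix obtained by appending the column (1, λ, λ^2, ..., λ^n)^T to (μ_{ij}). -/

import Mathlib

open Polynomial Matrix

/-- For any (n+1)×n matrix `μ` over a commutative ring and a scalar `λ`,
`det(λ μ_{ij} - μ_{i+1,j})_{0≤i,j≤n-1}` equals the determinant of the (n+1)×(n+1)
matrix obtained by appending the column `(1, λ, …, λ^n)ᵀ` to `μ`. -/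
theorem stmt3 {R : Type*} [CommRing R] (n : ℕ) (μ : Fin (n + 1) → Fin n → R) (lam : R) :
    Matrix.det (Matrix.of fun i j : Fin n =>
        lam * μ i.castSucc j - μ i.succ j) =
      Matrix.det (Matrix.of fun i j : Fin (n + 1) =>
        if h : (j : ℕ) < n then μ i ⟨j, h⟩ else lam ^ (i : ℕ)) := by
  classical
  -- work over R[X] with X in place of lam, so that powers of X can be cancelled
  set ν : Fin (n + 1) → Fin n → R[X] := fun i j => C (μ i j) with hν
  set M : Matrix (Fin (n + 1)) (Fin (n + 1)) R[X] :=
    Matrix.of fun i j => if h : (j : ℕ) < n then ν i ⟨j, h⟩ else (X : R[X]) ^ (i : ℕ) with hM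
  set L : Matrix (Fin n) (Fin n) R[X] :=
    Matrix.of fun i j => X * ν i.castSucc j - ν i.succ j with hL
  set d : Fin (n + 1) → R[X] := fun i => if (i : ℕ) = n then 1 else X with hd
  set A : Matrix (Fin (n + 1)) (Fin (n + 1)) R[X] :=
    Matrix.of fun i k => (if k = i then d i else 0) +
      (if (k : ℕ) = (i : ℕ) + 1 then -1 else 0) with hA
  set N : Matrix (Fin (n + 1)) (Fin (n + 1)) R[X] :=
    Matrix.of fun i j =>
      Fin.lastCases (M (Fin.last n) j) (fun i' => X * M i'.castSucc j - M i'.succ j) i with hN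
  -- A is upper triangular with determinant X^n
  have hdetA : A.det = X ^ n := by
    rw [Matrix.det_of_upperTriangular]
    · have h1 : ∀ i : Fin (n + 1), A i i = d i := by
        intro i
        simp [hA]
      rw [Finset.prod_congr rfl fun i _ => h1 i, Fin.prod_univ_castSucc]
      have h2 : ∀ i : Fin n, d i.castSucc = X := by
        intro i
        simp [hd, Fin.coe_castSucc, Nat.ne_of_lt i.isLt]
      rw [Finset.prod_congr rfl fun i _ => h2 i, Finset.prod_const, Finset.card_univ,
        Fintype.card_fin]
      simp [hd]
    · intro i j hij
      have hij' : (j : ℕ) < (i : ℕ) := hij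
      have h1 : j ≠ i := Fin.ne_of_lt hij
      have h2 : (j : ℕ) ≠ (i : ℕ) + 1 := by omega
      simp [hA, h1, h2]
  -- A * M = N
  have hAM : A * M = N := by
    ext i j
    have hsum : (A * M) i j = d i * M i j +
        ∑ k : Fin (n + 1), (if (k : ℕ) = (i : ℕ) + 1 then -M k j else 0) := by
      rw [Matrix.mul_apply]
      have : ∀ k : Fin (n + 1),
          A i k * M k j = (if k = i then d i * M k j else 0) +
            (if (k : ℕ) = (i : ℕ) + 1 then -M k j else 0) := by
        intro k
        simp only [hA, Matrix.of_apply, add_mul]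
        congr 1 <;> split <;> simp
      rw [Finset.sum_congr rfl fun k _ => this k, Finset.sum_add_distrib,
        Finset.sum_ite_eq' Finset.univ i (fun k => d i * M k j)]
      simp
    induction i using Fin.lastCases with
    | last =>
      rw [hsum]
      have : ∀ k : Fin (n + 1), (if (k : ℕ) = ((Fin.last n : Fin (n + 1)) : ℕ) + 1
          then -M k j else 0) = 0 := by
        intro k
        have : (k : ℕ) ≠ n + 1 := by have := k.isLt; omega
        simp [this]
      rw [Finset.sum_congr rfl fun k _ => this k]
      simp [hN, hd]
    | cast i' =>
      rw [hsum]
      have hco : ((i'.castSucc : Fin (n + 1)) : ℕ) = (i' : ℕ) := rfl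
      have : ∀ k : Fin (n + 1), (if (k : ℕ) = ((i'.castSucc : Fin (n + 1)) : ℕ) + 1
          then -M k j else 0) = if k = i'.succ then -M k j else 0 := by
        intro k
        have : ((k : ℕ) = (i'.castSucc : ℕ) + 1) ↔ k = i'.succ := by
          rw [Fin.ext_iff, Fin.val_succ, hco]
        simp only [this]
      rw [Finset.sum_congr rfl fun k _ => this k,
        Finset.sum_ite_eq' Finset.univ i'.succ (fun k => -M k j)]
      have hne : (i' : ℕ) ≠ n := Nat.ne_of_lt i'.isLt
      simp [hN, hd, hne, sub_eq_add_neg]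
  -- last column of N is zero except at the bottom
  have hMlast : ∀ k : Fin (n + 1), M k (Fin.last n) = (X : R[X]) ^ (k : ℕ) := by
    intro k
    simp [hM]
  have hNcol : ∀ i' : Fin n, N i'.castSucc (Fin.last n) = 0 := by
    intro i'
    simp only [hN, Matrix.of_apply, Fin.lastCases_castSucc, hMlast]
    rw [← pow_succ']
    simp [Fin.val_succ]
  -- compute det N by expanding along the last column
  have hdetN : N.det = X ^ n * L.det := by
    rw [Matrix.det_succ_column N (Fin.last n)]
    rw [Finset.sum_eq_single (Fin.last n)]
    · have hsub : N.submatrix (Fin.last n).succAbove (Fin.last n).succAbove = L := by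
        ext i j
        have hjlt : ((j.castSucc : Fin (n + 1)) : ℕ) < n := j.isLt
        simp only [Matrix.submatrix_apply, Fin.succAbove_last, hN, Matrix.of_apply,
          Fin.lastCases_castSucc, hM, hL, dif_pos hjlt]
        congr 1
      rw [hsub]
      have : N (Fin.last n) (Fin.last n) = X ^ n := by
        simp only [hN, Matrix.of_apply, Fin.lastCases_last, hMlast, Fin.val_last]
      rw [this]
      have : ((Fin.last n : Fin (n + 1)) : ℕ) + ((Fin.last n : Fin (n + 1)) : ℕ) = 2 * n := by
        simp [Fin.val_last]; ring
      rw [this, pow_mul]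
      simp
    · intro i _ hi
      obtain ⟨i', rfl⟩ := Fin.exists_castSucc_eq.mpr hi
      rw [hNcol i']
      ring
    · simp
  -- cancel X^n
  have hkey : L.det = M.det := by
    have h1 : X ^ n * M.det = X ^ n * L.det := by
      calc X ^ n * M.det = A.det * M.det := by rw [hdetA]
        _ = (A * M).det := (Matrix.det_mul A M).symm
        _ = N.det := by rw [hAM]
        _ = X ^ n * L.det := hdetN
    exact ((Polynomial.monic_X_pow n).isRegular.left h1.symm)
  -- evaluate at lam
  have := congrArg (Polynomial.evalRingHom lam) hkey
  rw [RingHom.map_det, RingHom.map_det] at this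
  have hLmap : (Polynomial.evalRingHom lam).mapMatrix L =
      Matrix.of fun i j : Fin n => lam * μ i.castSucc j - μ i.succ j := by
    ext i j
    simp only [RingHom.mapMatrix_apply, Matrix.map_apply, hL, Matrix.of_apply, hν,
      eval_sub, eval_mul, eval_X, eval_C, coe_evalRingHom]
  have hMmap : (Polynomial.evalRingHom lam).mapMatrix M =
      Matrix.of fun i j : Fin (n + 1) =>
        if h : (j : ℕ) < n then μ i ⟨j, h⟩ else lam ^ (i : ℕ) := by
    ext i j
    by_cases h : (j : ℕ) < n <;> simp [hM, hν, h]
  rw [hLmap, hMmap] at this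
  exact this
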